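/- arXiv:1510.06118 — 4 statements merged into one kernel-verified Lean document; each statement's English description precedes it below -/
import Mathlib

section
/- Let F : A → B be an exact functor between abelian categories, with A well-powered, and let S = ker(F) be the full subcategory of objects x with F(x) ≅ 0. Suppose that (1) for every object y of B there is an object x of A with F(x) ≅ y, and (2) for every morphism f : F(x) → F(x′) in B there exist an object x″ of A and morphisms h : x″ → x and g : x″ → x′ such that F(h) is an isomorphism and f ∘ F(h) = F(g). Then the induced functor A/S → B is an equivalence of categories. -/
open CategoryTheory CategoryTheory.Limits

/-- The class of morphisms of `A` whose kernel and cokernel are killed by `F`;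
the quotient of `A` by the Serre subcategory `ker F` is the localization of `A`
at this class of morphisms. -/
noncomputable def serreKernelW {A B : Type*} [Category A] [Category B] [Abelian A] [Abelian B]
    (F : A ⥤ B) : MorphismProperty A :=
  fun _ _ f => IsZero (F.obj (kernel f)) ∧ IsZero (F.obj (cokernel f))

section Auxiliary

variable {A B : Type*} [Category A] [Category B] [Abelian A] [Abelian B]
variable (F : A ⥤ B) [PreservesFiniteLimits F] [PreservesFiniteColimits F]

lemma serreKernelW_iff {x y : A} (f : x ⟶ y) :
    serreKernelW F f ↔ IsIso (F.map f) := by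
  constructor
  · rintro ⟨hk, hc⟩
    have hk' : IsZero (kernel (F.map f)) := hk.of_iso (PreservesKernel.iso F f).symm
    have hc' : IsZero (cokernel (F.map f)) := hc.of_iso (PreservesCokernel.iso F f).symm
    have : Mono (F.map f) := Abelian.mono_of_kernel_ι_eq_zero _ (hk'.eq_of_src _ _)
    have : Epi (F.map f) := Abelian.epi_of_cokernel_π_eq_zero _ (hc'.eq_of_tgt _ _)
    exact isIso_of_mono_of_epi _
  · intro h
    constructor
    · exact (isZero_zero B).of_iso (PreservesKernel.iso F f ≪≫ kernel.ofMono (F.map f))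
    · exact (isZero_zero B).of_iso (PreservesCokernel.iso F f ≪≫ cokernel.ofEpi (F.map f))

/-- The cokernel projection of a morphism killed by `F` is inverted by `F`. -/
lemma isIso_F_map_cokernel_π {x y : A} (d : x ⟶ y) (hd : F.map d = 0) :
    IsIso (F.map (cokernel.π d)) := by
  have h₁ : cokernel.π (F.map d) ≫ cokernelComparison d F = F.map (cokernel.π d) :=
    π_comp_cokernelComparison d F
  have h₂ : IsIso (cokernelComparison d F) := PreservesCokernel.iso_inv F d ▸
    (PreservesCokernel.iso F d).symm.isIso_hom
  have h₃ : IsIso (cokernel.π (F.map d)) := by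
    refine ⟨cokernel.desc _ (𝟙 _) (by rw [hd]; simp), cokernel.π_desc _ _ _, ?_⟩
    rw [← cancel_epi (cokernel.π (F.map d)), cokernel.π_desc_assoc]
    simp
  rw [← h₁]
  exact IsIso.comp_isIso

include F in
lemma serreKernelW_hasLeftCalculusOfFractions :
    (serreKernelW F).HasLeftCalculusOfFractions := by
  have : F.Additive := Functor.additive_of_preserves_binary_products F
  have mult : (serreKernelW F).IsMultiplicative :=
    { id_mem := fun x => by rw [serreKernelW_iff]; simp; infer_instance
      comp_mem := fun f g hf hg => by
        rw [serreKernelW_iff] at hf hg ⊢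
        rw [F.map_comp]
        exact IsIso.comp_isIso }
  refine { toIsMultiplicative := mult, exists_leftFraction := ?_, ext := ?_ }
  · intro X Y φ
    have hs : IsIso (F.map φ.s) := (serreKernelW_iff F _).1 φ.hs
    have hinr : IsIso (F.map (pushout.inr φ.s φ.f)) := by
      have := PreservesPushout.inr_iso_hom F φ.s φ.f
      rw [← this]
      exact IsIso.comp_isIso
    exact ⟨MorphismProperty.LeftFraction.mk (pushout.inl φ.s φ.f) (pushout.inr φ.s φ.f)
      ((serreKernelW_iff F _).2 hinr), pushout.condition.symm⟩
  · intro X' X Y f₁ f₂ s hs hfac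
    have hs' : IsIso (F.map s) := (serreKernelW_iff F _).1 hs
    have hd : F.map (f₁ - f₂) = 0 := by
      have : F.map s ≫ F.map (f₁ - f₂) = 0 := by
        rw [← F.map_comp, Preadditive.comp_sub, hfac, sub_self, F.map_zero]
      rw [← cancel_epi (F.map s), this, comp_zero]
    refine ⟨cokernel (f₁ - f₂), cokernel.π (f₁ - f₂),
      (serreKernelW_iff F _).2 (isIso_F_map_cokernel_π F _ hd), ?_⟩
    have : (f₁ - f₂) ≫ cokernel.π (f₁ - f₂) = 0 := cokernel.condition _
    rw [Preadditive.sub_comp] at this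
    exact sub_eq_zero.1 this

/-- Two morphisms with the same image under `F` become equal in the localization. -/
lemma serreKernelW_Q_map_eq {x y : A} (p q : x ⟶ y) (h : F.map p = F.map q) :
    (serreKernelW F).Q.map p = (serreKernelW F).Q.map q := by
  have : F.Additive := Functor.additive_of_preserves_binary_products F
  have hd : F.map (p - q) = 0 := by rw [F.map_sub, h, sub_self]
  have hc : serreKernelW F (cokernel.π (p - q)) :=
    (serreKernelW_iff F _).2 (isIso_F_map_cokernel_π F _ hd)
  haveI : IsIso ((serreKernelW F).Q.map (cokernel.π (p - q))) :=
    Localization.inverts (serreKernelW F).Q (serreKernelW F) _ hc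
  rw [← cancel_mono ((serreKernelW F).Q.map (cokernel.π (p - q))),
    ← Functor.map_comp, ← Functor.map_comp]
  congr 1
  have h0 : (p - q) ≫ cokernel.π (p - q) = 0 := cokernel.condition _
  rw [Preadditive.sub_comp] at h0
  exact sub_eq_zero.1 h0

end Auxiliary

/-- Let `F : A ⥤ B` be an exact functor between abelian categories, with `A`
well-powered, and let `S = ker F` be the full subcategory of objects `x` with `F x ≅ 0`.
Suppose (1) every object of `B` is isomorphic to some `F x`, and (2) every morphism
`f : F x ⟶ F x'` fits in a commuting triangle `F h ≫ f = F g` with `F h` an isomorphism.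
Then the induced functor `A / S ⥤ B` (where `A / S` is realized as the localization of `A`
at the morphisms whose kernel and cokernel lie in `S`) is an equivalence of categories. -/
theorem serre_quotient_equivalence {A : Type*} {B : Type*}
    [Category.{v₁} A] [Category B] [Abelian A] [Abelian B] [WellPowered.{v₁} A]
    (F : A ⥤ B) [PreservesFiniteLimits F] [PreservesFiniteColimits F]
    (h1 : ∀ y : B, ∃ x : A, Nonempty (F.obj x ≅ y))
    (h2 : ∀ (x x' : A) (f : F.obj x ⟶ F.obj x'),
      ∃ (x'' : A) (h : x'' ⟶ x) (g : x'' ⟶ x'),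
        IsIso (F.map h) ∧ F.map h ≫ f = F.map g) :
    ∃ G : (serreKernelW F).Localization ⥤ B,
      Nonempty ((serreKernelW F).Q ⋙ G ≅ F) ∧ G.IsEquivalence := by
  haveI : F.Additive := Functor.additive_of_preserves_binary_products F
  haveI hcalc : (serreKernelW F).HasLeftCalculusOfFractions :=
    serreKernelW_hasLeftCalculusOfFractions F
  have hinv : (serreKernelW F).IsInvertedBy F := fun x y f hf => (serreKernelW_iff F f).1 hf
  let G : (serreKernelW F).Localization ⥤ B := Localization.lift F hinv (serreKernelW F).Q
  let e : (serreKernelW F).Q ⋙ G ≅ F := Localization.fac F hinv (serreKernelW F).Q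
  have hQinv : (serreKernelW F).IsInvertedBy (serreKernelW F).Q :=
    Localization.inverts (serreKernelW F).Q (serreKernelW F)
  -- how `G` acts on morphisms coming from `A`
  have hGQ : ∀ {x y : A} (f : x ⟶ y), G.map ((serreKernelW F).Q.map f)
      = e.hom.app x ≫ F.map f ≫ e.inv.app y := by
    intro x y f
    have hnat := e.hom.naturality f
    rw [← cancel_mono (e.hom.app y)]
    simp only [Functor.comp_map] at hnat
    simp [hnat]
  -- surjectivity of `Q` on objects
  have surjobj : ∀ X : (serreKernelW F).Localization, ∃ x, (serreKernelW F).Q.obj x = X :=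
    (Localization.Construction.objEquiv (serreKernelW F)).surjective
  -- faithfulness on objects in the image of Q
  have key : ∀ (x x' : A) (a b : (serreKernelW F).Q.obj x ⟶ (serreKernelW F).Q.obj x'),
      G.map a = G.map b → a = b := by
    intro x x' a b hab
    obtain ⟨φ, rfl⟩ := Localization.exists_leftFraction (serreKernelW F).Q (serreKernelW F) a
    obtain ⟨ψ, rfl⟩ := Localization.exists_leftFraction (serreKernelW F).Q (serreKernelW F) b
    haveI hφs : IsIso (F.map φ.s) := (serreKernelW_iff F _).1 φ.hs
    haveI hψs : IsIso (F.map ψ.s) := (serreKernelW_iff F _).1 ψ.hs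
    set u := pushout.inl φ.s ψ.s with hu
    set v := pushout.inr φ.s ψ.s with hv
    have hWu : serreKernelW F u := by
      rw [serreKernelW_iff]
      rw [← PreservesPushout.inl_iso_hom F φ.s ψ.s]
      infer_instance
    have hpush : φ.s ≫ u = ψ.s ≫ v := pushout.condition
    have hWsu : serreKernelW F (φ.s ≫ u) := hcalc.toIsMultiplicative.comp_mem _ _ φ.hs hWu
    haveI : IsIso ((serreKernelW F).Q.map (φ.s ≫ u)) := hQinv _ hWsu
    have hφ : MorphismProperty.LeftFraction.map φ (serreKernelW F).Q hQinv
        ≫ (serreKernelW F).Q.map (φ.s ≫ u) = (serreKernelW F).Q.map (φ.f ≫ u) := by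
      rw [Functor.map_comp, ← Category.assoc, φ.map_comp_map_s, ← Functor.map_comp]
    have hψ : MorphismProperty.LeftFraction.map ψ (serreKernelW F).Q hQinv
        ≫ (serreKernelW F).Q.map (φ.s ≫ u) = (serreKernelW F).Q.map (ψ.f ≫ v) := by
      rw [hpush, Functor.map_comp, ← Category.assoc, ψ.map_comp_map_s, ← Functor.map_comp]
    have h3 : G.map ((serreKernelW F).Q.map (φ.f ≫ u))
        = G.map ((serreKernelW F).Q.map (ψ.f ≫ v)) := by
      rw [← hφ, ← hψ, G.map_comp, G.map_comp, hab]
    rw [hGQ, hGQ, cancel_epi, cancel_mono] at h3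
    have h4 := serreKernelW_Q_map_eq F _ _ h3
    rw [← cancel_mono ((serreKernelW F).Q.map (φ.s ≫ u)), hφ, hψ]
    exact h4
  -- fullness on objects in the image of Q
  have keyfull : ∀ (x x' : A) (t : G.obj ((serreKernelW F).Q.obj x)
      ⟶ G.obj ((serreKernelW F).Q.obj x')),
      ∃ m : (serreKernelW F).Q.obj x ⟶ (serreKernelW F).Q.obj x', G.map m = t := by
    intro x x' t
    obtain ⟨x'', h, g, hiso, hfac⟩ := h2 x x' (e.inv.app x ≫ t ≫ e.hom.app x')
    have hWh : serreKernelW F h := (serreKernelW_iff F h).2 hiso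
    haveI : IsIso ((serreKernelW F).Q.map h) := hQinv _ hWh
    haveI : IsIso (F.map h) := hiso
    refine ⟨inv ((serreKernelW F).Q.map h) ≫ (serreKernelW F).Q.map g, ?_⟩
    haveI : IsIso (G.map ((serreKernelW F).Q.map h)) := by rw [hGQ]; infer_instance
    rw [G.map_comp, Functor.map_inv, IsIso.inv_comp_eq, hGQ, hGQ, ← hfac]
    simp
  haveI hfaith : G.Faithful := by
    refine ⟨fun {X Y} a b hab => ?_⟩
    obtain ⟨x, rfl⟩ := surjobj X
    obtain ⟨x', rfl⟩ := surjobj Y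
    exact key x x' a b hab
  haveI hfull : G.Full := by
    refine ⟨fun {X Y} t => ?_⟩
    obtain ⟨x, rfl⟩ := surjobj X
    obtain ⟨x', rfl⟩ := surjobj Y
    obtain ⟨m, hm⟩ := keyfull x x' t
    exact ⟨m, hm⟩
  haveI hess : G.EssSurj := by
    refine ⟨fun y => ?_⟩
    obtain ⟨x, ⟨i⟩⟩ := h1 y
    exact ⟨(serreKernelW F).Q.obj x, ⟨e.app x ≪≫ i⟩⟩
  exact ⟨G, ⟨e⟩, ⟨hfaith, hfull, hess⟩⟩
end

section
/- Let A be an abelian category, n a positive integer, and r = (r₁,…,rₙ) an n-tuple of natural numbers with rₙ > 0. Let π : Func(rIⁿ, A) → Func(tr(r)Iⁿ⁻¹, A) be the restriction along the inclusion (x₁,…,x_{n−1}) ↦ (x₁,…,x_{n−1},0), where tr(r) = (r₁,…,r_{n−1}). Then the kernel of π, i.e. the full subcategory of functors G : rIⁿ → A with G(u₁,…,u_{n−1},0) ≅ 0 for all (u₁,…,u_{n−1}), is equivalent to the functor category Func(sIⁿ, A), where s = (r₁,…,r_{n−1}, rₙ − 1). -/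
open CategoryTheory CategoryTheory.Limits

/-- The poset `rIⁿ` of integer points `u` with `0 ≤ uᵢ ≤ rᵢ`, ordered componentwise. -/
abbrev Box (n : ℕ) (r : Fin n → ℕ) : Type := {u : Fin n → ℕ // ∀ i, u i ≤ r i}

/-- The inclusion `(x₁,…,xₙ) ↦ (x₁,…,xₙ,0)` of `tr(r)Iⁿ` into `rIⁿ⁺¹`,
where `tr(r) = (r₁,…,rₙ)` is `r` with its last entry dropped. -/
def boxIncl (n : ℕ) (r : Fin (n + 1) → ℕ) (u : Box n fun i => r i.castSucc) :
    Box (n + 1) r :=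
  ⟨Fin.snoc u.1 0, by
    intro i
    induction i using Fin.lastCases with
    | last => simp
    | cast j => simpa using u.2 j⟩

lemma boxIncl_mono (n : ℕ) (r : Fin (n + 1) → ℕ) : Monotone (boxIncl n r) := by
  intro u v huv i
  induction i using Fin.lastCases with
  | last => simp [boxIncl]
  | cast j => simpa [boxIncl] using huv j

/-- The restriction functor `π : Func(rIⁿ⁺¹, A) ⥤ Func(tr(r)Iⁿ, A)` along the inclusion
`(x₁,…,xₙ) ↦ (x₁,…,xₙ,0)`. -/
def boxRestrict (n : ℕ) (r : Fin (n + 1) → ℕ) (A : Type*) [Category A] :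
    (Box (n + 1) r ⥤ A) ⥤ ((Box n fun i => r i.castSucc) ⥤ A) :=
  (Functor.whiskeringLeft _ _ A).obj (boxIncl_mono n r).functor

open ZeroObject

/-! ### Auxiliary development -/

section Aux

variable (n : ℕ) (r : Fin (n + 1) → ℕ)

/-- The truncated vector `s = (r₁,…,rₙ, rₙ₊₁ − 1)`. -/
abbrev sVec : Fin (n + 1) → ℕ := Function.update r (Fin.last n) (r (Fin.last n) - 1)

lemma sVec_apply_ne {i : Fin (n + 1)} (h : i ≠ Fin.last n) : sVec n r i = r i :=
  Function.update_of_ne h _ _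

/-- Shift up in the last coordinate : `Box s → Box r`. -/
def shiftUp (hr : 0 < r (Fin.last n)) (u : Box (n + 1) (sVec n r)) : Box (n + 1) r :=
  ⟨Function.update u.1 (Fin.last n) (u.1 (Fin.last n) + 1), by
    intro i
    by_cases h : i = Fin.last n
    · subst h
      rw [Function.update_self]
      have := u.2 (Fin.last n)
      simp only [sVec, Function.update_self] at this
      omega
    · rw [Function.update_of_ne h]
      simpa [sVec_apply_ne n r h] using u.2 i⟩

/-- Shift down in the last coordinate : `Box r → Box s`. -/
def shiftDown (u : Box (n + 1) r) : Box (n + 1) (sVec n r) :=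
  ⟨Function.update u.1 (Fin.last n) (u.1 (Fin.last n) - 1), by
    intro i
    by_cases h : i = Fin.last n
    · subst h
      simp only [sVec, Function.update_self]
      have := u.2 (Fin.last n); omega
    · rw [Function.update_of_ne h, sVec_apply_ne n r h]
      exact u.2 i⟩

variable (hr : 0 < r (Fin.last n))

lemma shiftUp_mono : Monotone (shiftUp n r hr) := by
  intro u v huv i
  by_cases h : i = Fin.last n
  · subst h
    simp only [shiftUp, Function.update_self]
    exact Nat.succ_le_succ (huv (Fin.last n))
  · simpa only [shiftUp, Function.update_of_ne h] using huv i

lemma shiftDown_mono : Monotone (shiftDown n r) := by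
  intro u v huv i
  by_cases h : i = Fin.last n
  · subst h
    simp only [shiftDown, Function.update_self]
    exact Nat.sub_le_sub_right (huv (Fin.last n)) 1
  · simpa only [shiftDown, Function.update_of_ne h] using huv i

lemma shiftDown_shiftUp (u : Box (n + 1) (sVec n r)) :
    shiftDown n r (shiftUp n r hr u) = u := by
  apply Subtype.ext
  simp [shiftDown, shiftUp, Function.update_idem]

lemma shiftUp_shiftDown (u : Box (n + 1) r) (hu : u.1 (Fin.last n) ≠ 0) :
    shiftUp n r hr (shiftDown n r u) = u := by
  apply Subtype.ext
  simp only [shiftUp, shiftDown, Function.update_idem, Function.update_self]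
  rw [Nat.sub_add_cancel (Nat.one_le_iff_ne_zero.mpr hu), Function.update_eq_self]

lemma shiftUp_last_ne (u : Box (n + 1) (sVec n r)) :
    (shiftUp n r hr u).1 (Fin.last n) ≠ 0 := by
  simp [shiftUp]

lemma last_le_of_le {u v : Box (n + 1) r} (h : u ≤ v) :
    u.1 (Fin.last n) ≤ v.1 (Fin.last n) := h _

/-- If the last coordinate is `0`, `u` is in the image of `boxIncl`. -/
lemma eq_boxIncl (u : Box (n + 1) r) (hu : u.1 (Fin.last n) = 0) :
    u = boxIncl n r ⟨fun i => u.1 i.castSucc, fun i => u.2 i.castSucc⟩ := by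
  apply Subtype.ext
  funext i
  induction i using Fin.lastCases with
  | last => simpa [boxIncl] using hu
  | cast j => simp [boxIncl]

variable {A : Type*} [Category A]

/-- In a preorder-indexed diagram, maps are determined by endpoints. -/
lemma pmap_congr {P : Type*} [Preorder P] (F : P ⥤ A) {x y x' y' : P}
    (ex : x' = x) (ey : y = y') (f : x ⟶ y) (f' : x' ⟶ y') :
    eqToHom (congrArg F.obj ex) ≫ F.map f ≫ eqToHom (congrArg F.obj ey) = F.map f' := by
  subst ex; subst ey
  simp only [eqToHom_refl, Category.comp_id, Category.id_comp]
  congr 1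
  apply Subsingleton.elim

lemma app_congr {C : Type*} [Category C] {F G : C ⥤ A} (γ : F ⟶ G) {x y : C} (e : x = y) :
    γ.app y = eqToHom (by rw [e]) ≫ γ.app x ≫ eqToHom (by rw [e]) := by
  subst e; simp

variable [HasZeroObject A]

/-- Extension by zero of `H : Box s ⥤ A` to `Box r ⥤ A`. -/
noncomputable def extByZero (H : Box (n + 1) (sVec n r) ⥤ A) : Box (n + 1) r ⥤ A where
  obj u := if u.1 (Fin.last n) = 0 then (0 : A) else H.obj (shiftDown n r u)
  map {u v} f :=
    if hu : u.1 (Fin.last n) = 0 then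
      ((isZero_zero A).of_iso (eqToIso (if_pos hu))).to_ _
    else
      eqToHom (if_neg hu) ≫ H.map (homOfLE (shiftDown_mono n r (leOfHom f))) ≫
        eqToHom (if_neg (fun hv => hu (by have := last_le_of_le n r (leOfHom f); omega))).symm
  map_id u := by
    by_cases hu : u.1 (Fin.last n) = 0
    · rw [dif_pos hu]
      exact ((isZero_zero A).of_iso (eqToIso (if_pos hu))).eq_of_src _ _
    · rw [dif_neg hu]
      have : H.map (homOfLE (shiftDown_mono n r (leOfHom (𝟙 u)))) = 𝟙 _ := by
        rw [show homOfLE (shiftDown_mono n r (leOfHom (𝟙 u))) = 𝟙 _ from Subsingleton.elim _ _]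
        simp
      rw [this]; simp
  map_comp {u v w} f g := by
    by_cases hu : u.1 (Fin.last n) = 0
    · rw [dif_pos hu, dif_pos hu]
      exact ((isZero_zero A).of_iso (eqToIso (if_pos hu))).eq_of_src _ _
    · have hv : v.1 (Fin.last n) ≠ 0 :=
        fun hv => hu (Nat.le_zero.mp (hv ▸ leOfHom f (Fin.last n)))
      rw [dif_neg hu, dif_neg hu, dif_neg hv]
      simp only [Category.assoc, eqToHom_trans_assoc, eqToHom_refl, Category.id_comp,
        ← H.map_comp_assoc, homOfLE_comp]

lemma extByZero_isZero (H : Box (n + 1) (sVec n r) ⥤ A) (u : Box (n + 1) r)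
    (hu : u.1 (Fin.last n) = 0) : IsZero ((extByZero n r H).obj u) :=
  (isZero_zero A).of_iso (eqToIso (if_pos hu))

/-- The comparison functor from the kernel to `Func(Box s, A)`. -/
noncomputable def theta :
    (ObjectProperty.FullSubcategory fun G : Box (n + 1) r ⥤ A =>
      ∀ u : Box n fun i => r i.castSucc, IsZero (G.obj (boxIncl n r u))) ⥤
    (Box (n + 1) (sVec n r) ⥤ A) :=
  ObjectProperty.ι _ ⋙ (Functor.whiskeringLeft _ _ A).obj (shiftUp_mono n r hr).functor

lemma mem_isZero
    {G : Box (n + 1) r ⥤ A}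
    (hG : ∀ u : Box n fun i => r i.castSucc, IsZero (G.obj (boxIncl n r u)))
    (u : Box (n + 1) r) (hu : u.1 (Fin.last n) = 0) : IsZero (G.obj u) := by
  rw [eq_boxIncl n r u hu]
  exact hG _

lemma extByZero_obj_eq (H : Box (n + 1) (sVec n r) ⥤ A) {u : Box (n + 1) r}
    (hu : u.1 (Fin.last n) ≠ 0) :
    (extByZero n r H).obj u = H.obj (shiftDown n r u) := if_neg hu

lemma extByZero_map (H : Box (n + 1) (sVec n r) ⥤ A) {u v : Box (n + 1) r}
    (g : u ⟶ v) (hu : u.1 (Fin.last n) ≠ 0) :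
    (extByZero n r H).map g = eqToHom (extByZero_obj_eq n r H hu) ≫
      H.map (homOfLE (shiftDown_mono n r (leOfHom g))) ≫
      eqToHom (extByZero_obj_eq n r H
        (fun hv => hu (by have := last_le_of_le n r (leOfHom g); omega))).symm :=
  dif_neg hu

lemma theta_map_app
    {X Y : ObjectProperty.FullSubcategory fun G : Box (n + 1) r ⥤ A =>
      ∀ u : Box n fun i => r i.castSucc, IsZero (G.obj (boxIncl n r u))}
    (α : X ⟶ Y) (w : Box (n + 1) (sVec n r)) :
    ((theta n r hr).map α).app w = α.hom.app (shiftUp n r hr w) := rfl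

instance theta_faithful : (theta n r hr (A := A)).Faithful where
  map_injective {X Y} {α β} h := by
    apply ObjectProperty.hom_ext
    apply NatTrans.ext
    funext u
    by_cases hu : u.1 (Fin.last n) = 0
    · exact (mem_isZero n r X.2 u hu).eq_of_src _ _
    · have e := shiftUp_shiftDown n r hr u hu
      rw [← e]
      exact NatTrans.congr_app h (shiftDown n r u)

instance theta_full : (theta n r hr (A := A)).Full where
  map_surjective {X Y} γ := by
    refine ⟨ObjectProperty.homMk ⟨fun u =>
        if hu : u.1 (Fin.last n) = 0 then (mem_isZero n r X.2 u hu).to_ _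
        else
          eqToHom (congrArg X.obj.obj (shiftUp_shiftDown n r hr u hu)).symm ≫
            γ.app (shiftDown n r u) ≫
              eqToHom (congrArg Y.obj.obj (shiftUp_shiftDown n r hr u hu)), ?_⟩, ?_⟩
    · intro u v f
      by_cases hu : u.1 (Fin.last n) = 0
      · exact (mem_isZero n r X.2 u hu).eq_of_src _ _
      · have hv : v.1 (Fin.last n) ≠ 0 :=
          fun hv => hu (by have := last_le_of_le n r (leOfHom f); omega)
        rw [dif_neg hu, dif_neg hv]
        have key : X.obj.map (homOfLE (shiftUp_mono n r hr
              (shiftDown_mono n r (leOfHom f)))) ≫ γ.app (shiftDown n r v) =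
            γ.app (shiftDown n r u) ≫ Y.obj.map (homOfLE (shiftUp_mono n r hr
              (shiftDown_mono n r (leOfHom f)))) :=
          γ.naturality (homOfLE (shiftDown_mono n r (leOfHom f)))
        rw [← pmap_congr X.obj (shiftUp_shiftDown n r hr u hu).symm
          (shiftUp_shiftDown n r hr v hv)
          (homOfLE (shiftUp_mono n r hr (shiftDown_mono n r (leOfHom f)))) f]
        rw [← pmap_congr Y.obj (shiftUp_shiftDown n r hr u hu).symm
          (shiftUp_shiftDown n r hr v hv)
          (homOfLE (shiftUp_mono n r hr (shiftDown_mono n r (leOfHom f)))) f]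
        simp only [Category.assoc, eqToHom_trans, eqToHom_trans_assoc, eqToHom_refl,
          Category.comp_id, Category.id_comp]
        erw [← Category.assoc _ (γ.app (shiftDown n r v)), key]
        erw [Category.assoc, Category.assoc (γ.app _), eqToHom_trans_assoc, eqToHom_refl, Category.id_comp]
        rfl
    · apply NatTrans.ext
      funext w
      rw [theta_map_app]
      change dite _ _ _ = _
      erw [dif_neg (shiftUp_last_ne n r hr w)]
      rw [app_congr γ (shiftDown_shiftUp n r hr w)]
      rfl

instance theta_essSurj : (theta n r hr (A := A)).EssSurj where
  mem_essImage H := by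
    refine ⟨⟨extByZero n r H, fun u => extByZero_isZero n r H _ (by rw [boxIncl]; simp)⟩, ⟨?_⟩⟩
    refine NatIso.ofComponents
      (fun w => eqToIso ((extByZero_obj_eq n r H (shiftUp_last_ne n r hr w)).trans
        (congrArg H.obj (shiftDown_shiftUp n r hr w)))) ?_
    intro w w' f
    erw [eqToIso.hom, eqToIso.hom]
    have : ((theta n r hr (A := A)).obj
        ⟨extByZero n r H, fun u => extByZero_isZero n r H _ (by rw [boxIncl]; simp)⟩).map f =
        (extByZero n r H).map (homOfLE (shiftUp_mono n r hr (leOfHom f))) := rfl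
    rw [this, extByZero_map n r H _ (shiftUp_last_ne n r hr w)]
    rw [← pmap_congr H (shiftDown_shiftUp n r hr w).symm
      (shiftDown_shiftUp n r hr w') (homOfLE (shiftDown_mono n r
        (shiftUp_mono n r hr (leOfHom f)))) f]
    erw [Category.assoc, Category.assoc, eqToHom_trans, eqToHom_trans_assoc]
    rfl

end Aux


/-- If `rₙ₊₁ > 0` then the kernel of the restriction functor
`π : Func(rIⁿ⁺¹, A) ⥤ Func(tr(r)Iⁿ, A)`, i.e. the full subcategory of functors `G` with
`G (u₁,…,uₙ,0) ≅ 0` for all `(u₁,…,uₙ)`, is equivalent to `Func(sIⁿ⁺¹, A)` where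
`s = (r₁,…,rₙ, rₙ₊₁ − 1)`. -/
theorem boxRestrict_kernel_equivalence
    {A : Type*} [Category A] [Abelian A] (n : ℕ) (r : Fin (n + 1) → ℕ)
    (hr : 0 < r (Fin.last n)) :
    Nonempty
      ((ObjectProperty.FullSubcategory fun G : Box (n + 1) r ⥤ A =>
          ∀ u : Box n fun i => r i.castSucc, IsZero (G.obj (boxIncl n r u))) ≌
        (Box (n + 1) (Function.update r (Fin.last n) (r (Fin.last n) - 1)) ⥤ A)) := by
  have : (theta n r hr (A := A)).IsEquivalence := {}
  exact ⟨(theta n r hr).asEquivalence⟩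
end

section
/- Let A be a well-powered abelian category, n a positive integer, and r = (r₁,…,rₙ) an n-tuple of natural numbers. Let π : Func(rIⁿ, A) → Func(tr(r)Iⁿ⁻¹, A) be the restriction along the inclusion (x₁,…,x_{n−1}) ↦ (x₁,…,x_{n−1},0), where tr(r) = (r₁,…,r_{n−1}). Then ker(π) is a Serre subcategory of Func(rIⁿ, A) and π induces an equivalence of categories Func(rIⁿ, A)/ker(π) ≃ Func(tr(r)Iⁿ⁻¹, A). -/
open CategoryTheory CategoryTheory.Limits

/-- A *Serre subcategory* of an abelian category, given as a property of objects:
a nonempty full subcategory closed under subobjects, quotient objects and extensions. -/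
structure IsSerreSubcategory {C : Type*} [Category C] [Abelian C] (P : C → Prop) : Prop where
  nonempty : ∃ x : C, P x
  closed_under_sub : ∀ {x y : C} (f : x ⟶ y), Mono f → P y → P x
  closed_under_quot : ∀ {x y : C} (f : x ⟶ y), Epi f → P x → P y
  closed_under_ext : ∀ (S : ShortComplex C), S.ShortExact → P S.X₁ → P S.X₃ → P S.X₂

/-- The property of being in the kernel of the restriction functor `π`:
a functor `G : rIⁿ⁺¹ ⥤ A` with `G (u₁,…,uₙ,0) ≅ 0` for all `(u₁,…,uₙ)`. -/
def boxKerP {A : Type*} [Category A] [Abelian A] (n : ℕ) (r : Fin (n + 1) → ℕ)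
    (G : Box (n + 1) r ⥤ A) : Prop :=
  ∀ u : Box n fun i => r i.castSucc, IsZero (G.obj (boxIncl n r u))

/-- The class of morphisms of `Func(rIⁿ⁺¹, A)` whose kernel and cokernel lie in `ker π`;
the quotient by the Serre subcategory `ker π` is the localization at this class. -/
noncomputable def boxKerW {A : Type*} [Category A] [Abelian A] (n : ℕ) (r : Fin (n + 1) → ℕ) :
    MorphismProperty (Box (n + 1) r ⥤ A) :=
  fun _ _ f => boxKerP n r (kernel f) ∧ boxKerP n r (cokernel f)

namespace BoxSerre

variable (n : ℕ) (r : Fin (n + 1) → ℕ)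

/-- Truncation, dropping the last coordinate. -/
def boxTrunc (v : Box (n + 1) r) : Box n fun i => r i.castSucc :=
  ⟨fun i => v.1 i.castSucc, fun i => v.2 i.castSucc⟩

lemma boxTrunc_mono : Monotone (boxTrunc n r) := fun _ _ h i => h i.castSucc

lemma box_gc : GaloisConnection (boxIncl n r) (boxTrunc n r) := by
  intro u v
  constructor
  · intro h i
    have := h i.castSucc
    simpa [boxIncl, boxTrunc] using this
  · intro h i
    induction i using Fin.lastCases with
    | last => simpa [boxIncl] using Nat.zero_le _
    | cast j => simpa [boxIncl, boxTrunc] using h j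

lemma boxTrunc_boxIncl (u : Box n fun i => r i.castSucc) :
    boxTrunc n r (boxIncl n r u) = u :=
  Subtype.ext (funext fun i => by simp [boxTrunc, boxIncl])

variable (A : Type*) [Category A]

/-- The extension functor, precomposition with truncation. -/
def boxExtend : ((Box n fun i => r i.castSucc) ⥤ A) ⥤ (Box (n + 1) r ⥤ A) :=
  (Functor.whiskeringLeft _ _ A).obj (boxTrunc_mono n r).functor

/-- The adjunction `boxExtend ⊣ boxRestrict`. -/
def boxAdj : boxExtend n r A ⊣ boxRestrict n r A :=
  Adjunction.whiskerLeft A (box_gc n r).adjunction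

instance (u : Box n fun i => r i.castSucc) :
    IsIso ((box_gc n r).adjunction.unit.app u) := by
  have e : ((boxIncl_mono n r).functor ⋙ (boxTrunc_mono n r).functor).obj u = u :=
    boxTrunc_boxIncl n r u
  exact ⟨⟨eqToHom e, Subsingleton.elim _ _, Subsingleton.elim _ _⟩⟩

instance : IsIso (boxAdj n r A).unit := by
  have h : ∀ X, IsIso ((boxAdj n r A).unit.app X) := by
    intro X
    have : ∀ c, IsIso (((boxAdj n r A).unit.app X).app c) := by
      intro c
      simp only [boxAdj, Adjunction.whiskerLeft_unit_app_app]
      have hc : IsIso ((box_gc n r).adjunction.unit.app c) :=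
        ⟨⟨homOfLE (le_of_eq (boxTrunc_boxIncl n r c)), Subsingleton.elim _ _, Subsingleton.elim _ _⟩⟩
      exact Functor.map_isIso X _
    exact NatIso.isIso_of_isIso_app _
  exact NatIso.isIso_of_isIso_app _

instance : (boxExtend n r A).Full :=
  ((boxAdj n r A).fullyFaithfulLOfIsIsoUnit).full

instance : (boxExtend n r A).Faithful :=
  ((boxAdj n r A).fullyFaithfulLOfIsIsoUnit).faithful

open Localization in
/-- A functor with a fully faithful left adjoint is a localization functor at the class
of morphisms it inverts. -/
lemma coreflective_isLocalization {C₁ C₂ : Type*} [Category C₁] [Category C₂]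
    {E : C₂ ⥤ C₁} {π : C₁ ⥤ C₂} (adj : E ⊣ π) [E.Full] [E.Faithful] :
    π.IsLocalization ((MorphismProperty.isomorphisms C₂).inverseImage π) := by
  let W := (MorphismProperty.isomorphisms C₂).inverseImage π
  have hπ : W.IsInvertedBy π := fun _ _ _ hf => hf
  have h1 : ∀ (X : C₁), IsIso ((Functor.whiskerRight adj.counit W.Q).app X) := fun X =>
    Localization.inverts W.Q W _
      (by
        dsimp only [W, MorphismProperty.inverseImage, MorphismProperty.isomorphisms]
        infer_instance)
  have h2 : IsIso (Functor.whiskerRight adj.counit W.Q) := NatIso.isIso_of_isIso_app _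
  let e : W.Localization ≌ C₂ :=
    CategoryTheory.Equivalence.mk (Localization.lift π hπ W.Q) (E ⋙ W.Q)
      (liftNatIso W.Q W W.Q (π ⋙ E ⋙ W.Q) _ _
        (W.Q.leftUnitor.symm ≪≫ (asIso (Functor.whiskerRight adj.counit W.Q)).symm ≪≫
          Functor.associator _ _ _))
      (Functor.associator _ _ _ ≪≫ Functor.isoWhiskerLeft E (Localization.fac π hπ W.Q) ≪≫
        (asIso adj.unit).symm)
  exact Functor.IsLocalization.of_equivalence_target W.Q W π e (Localization.fac π hπ W.Q)

section Abelian

variable {A : Type*} [Category A] [Abelian A] (n : ℕ) (r : Fin (n + 1) → ℕ)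

lemma kerW_iff {F G : Box (n + 1) r ⥤ A} (f : F ⟶ G) :
    boxKerW n r f ↔ IsIso ((boxRestrict n r A).map f) := by
  rw [NatTrans.isIso_iff_isIso_app]
  have keriso : ∀ c : Box (n + 1) r, (kernel f).obj c ≅ kernel (f.app c) := fun c =>
    PreservesKernel.iso ((evaluation _ A).obj c) f
  have cokiso : ∀ c : Box (n + 1) r, (cokernel f).obj c ≅ cokernel (f.app c) := fun c =>
    PreservesCokernel.iso ((evaluation _ A).obj c) f
  constructor
  · rintro ⟨hk, hc⟩ u
    show IsIso (f.app (boxIncl n r u))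
    rw [isIso_iff_mono_and_epi]
    constructor
    · exact Preadditive.mono_of_isZero_kernel _ (((hk u).of_iso (keriso _).symm))
    · exact Preadditive.epi_of_isZero_cokernel _ (((hc u).of_iso (cokiso _).symm))
  · intro h
    constructor <;> intro u
    · have : IsIso (f.app (boxIncl n r u)) := h u
      have : Mono (f.app (boxIncl n r u)) := inferInstance
      exact ((isZero_zero A).of_iso (kernel.ofMono _)).of_iso (keriso _)
    · have : IsIso (f.app (boxIncl n r u)) := h u
      have : Epi (f.app (boxIncl n r u)) := inferInstance
      exact ((isZero_zero A).of_iso (cokernel.ofEpi _)).of_iso (cokiso _)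

lemma kerW_eq : boxKerW (A := A) n r =
    (MorphismProperty.isomorphisms _).inverseImage (boxRestrict n r A) := by
  funext F G f
  exact propext (kerW_iff n r f)

instance : (boxRestrict n r A).IsLocalization (boxKerW (A := A) n r) := by
  rw [kerW_eq]
  exact coreflective_isLocalization (boxAdj n r A)

end Abelian

end BoxSerre

open BoxSerre ZeroObject in
/-- The kernel of the restriction functor
`π : Func(rIⁿ⁺¹, A) ⥤ Func(tr(r)Iⁿ, A)` is a Serre subcategory, and `π` induces an
equivalence `Func(rIⁿ⁺¹, A) / ker π ≃ Func(tr(r)Iⁿ, A)`, where the quotient is realized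
as the localization at the morphisms whose kernel and cokernel lie in `ker π`. -/
theorem boxRestrict_serre_quotient
    {A : Type*} [Category.{u_2} A] [Abelian A] [WellPowered.{u_2} A] (n : ℕ) (r : Fin (n + 1) → ℕ) :
    IsSerreSubcategory (boxKerP (A := A) n r) ∧
    ∃ G : (boxKerW (A := A) n r).Localization ⥤ ((Box n fun i => r i.castSucc) ⥤ A),
      Nonempty ((boxKerW (A := A) n r).Q ⋙ G ≅ boxRestrict n r A) ∧ G.IsEquivalence := by
  constructor
  · constructor
    · exact ⟨0, fun u => (isZero_zero _).obj _⟩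
    · intro x y f hf hy u
      haveI := hf
      exact IsZero.of_mono (f.app (boxIncl n r u)) (hy u)
    · intro x y f hf hx u
      haveI := hf
      exact IsZero.of_epi (f.app (boxIncl n r u)) (hx u)
    · intro S hS h₁ h₃ u
      haveI : PreservesFiniteLimits ((evaluation (Box (n + 1) r) A).obj (boxIncl n r u)) :=
        ⟨fun J _ _ => inferInstance⟩
      haveI : PreservesFiniteColimits ((evaluation (Box (n + 1) r) A).obj (boxIncl n r u)) :=
        ⟨fun J _ _ => inferInstance⟩
      have hS' := hS.map_of_exact ((evaluation (Box (n + 1) r) A).obj (boxIncl n r u))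
      exact hS'.exact.isZero_X₂ ((h₁ u).eq_zero_of_src _) ((h₃ u).eq_zero_of_tgt _)
  · exact ⟨(Localization.uniq (boxKerW (A := A) n r).Q (boxRestrict n r A)
        (boxKerW n r)).functor,
      ⟨Localization.compUniqFunctor _ _ _⟩, inferInstance⟩
end

section
/- Let (R, m) be a regular local (Noetherian, commutative) ring, let f₁,…,fₙ ∈ m be part of a regular system of parameters of R (that is, elements of m whose images in m/m² are linearly independent over the residue field), and let r₁,…,rₙ be positive integers. Then the ring A = R[t₁,…,tₙ]/(t₁^{r₁} − f₁, …, tₙ^{rₙ} − fₙ) is a regular local ring, of the same Krull dimension as R, with maximal ideal generated by t₁,…,tₙ together with the remaining members of the regular system of parameters. -/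
open IsLocalRing MvPolynomial

/-- The ring `A = R[t₁,…,tₙ]/(t₁^{r₁} − f₁, …, tₙ^{rₙ} − fₙ)`. -/
noncomputable def rootRing (R : Type*) [CommRing R] (n : ℕ) (f : Fin n → R) (r : Fin n → ℕ) :
    Type _ :=
  MvPolynomial (Fin n) R ⧸
    Ideal.span (Set.range fun i => (X i : MvPolynomial (Fin n) R) ^ r i - C (f i))

noncomputable instance (R : Type*) [CommRing R] (n : ℕ) (f : Fin n → R) (r : Fin n → ℕ) :
    CommRing (rootRing R n f r) := by
  delta rootRing; infer_instance



universe u v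

theorem sub_C_constantCoeff_mem_span {R : Type u} [CommRing R] {σ : Type v}
    (p : MvPolynomial σ R) :
    p - C (constantCoeff p) ∈ Ideal.span (Set.range (X (R := R) (σ := σ))) := by
  induction p using MvPolynomial.induction_on with
  | C a => simp
  | add p q hp hq =>
      have := Ideal.add_mem _ hp hq
      simpa [add_sub_add_comm] using this
  | mul_X p i hp =>
      have hx : (X i : MvPolynomial σ R) ∈ Ideal.span (Set.range X) :=
        Ideal.subset_span ⟨i, rfl⟩
      simpa using Ideal.mul_mem_left _ p hx

theorem adjoinRoot_algebraMap_injective {B : Type u} [CommRing B] {g : Polynomial B}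
    (hg : g.Monic) (hdeg : g.natDegree ≠ 0) :
    Function.Injective (algebraMap B (AdjoinRoot g)) := by
  let pb := AdjoinRoot.powerBasis' hg
  rw [injective_iff_map_eq_zero]
  intro c hc
  have h0 : c • pb.basis ⟨0, Nat.pos_of_ne_zero hdeg⟩ = 0 := by
    rw [pb.basis_eq_pow, pow_zero, ← Algebra.algebraMap_eq_smul_one, hc]
  have h1 := congrArg (fun v => (pb.basis.repr v) ⟨0, Nat.pos_of_ne_zero hdeg⟩) h0
  simp only [map_smul, Finsupp.smul_apply, Module.Basis.repr_self, map_zero, Finsupp.coe_zero,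
    Pi.zero_apply, Finsupp.single_eq_same, smul_eq_mul, mul_one] at h1
  exact h1


theorem exists_root_extension {R : Type u} [CommRing R] [Nontrivial R] (n : ℕ)
    (f : Fin n → R) (r : Fin n → ℕ) (hr : ∀ i, 0 < r i) :
    ∃ (B : Type u) (_ : CommRing B) (_ : Algebra R B),
      Function.Injective (algebraMap R B) ∧
      ∀ i, ∃ s : B, s ^ r i = algebraMap R B (f i) := by
  induction n with
  | zero =>
      exact ⟨R, ‹_›, Algebra.id R, fun a b h => by simpa using h, fun i => i.elim0⟩
  | succ n ih =>
      obtain ⟨B', iB', iAB', hinj, hroot⟩ :=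
        ih (fun i => f i.castSucc) (fun i => r i.castSucc) (fun i => hr _)
      letI := iB'; letI := iAB'
      haveI : Nontrivial B' :=
        ⟨⟨algebraMap R B' 0, algebraMap R B' 1, fun h => zero_ne_one (hinj h)⟩⟩
      set c : B' := algebraMap R B' (f (Fin.last n)) with hc
      set g : Polynomial B' := Polynomial.X ^ (r (Fin.last n)) - Polynomial.C c with hgdef
      have hg : g.Monic := Polynomial.monic_X_pow_sub_C _ (hr _).ne'
      have hdeg : g.natDegree ≠ 0 := by
        rw [hgdef, Polynomial.natDegree_X_pow_sub_C]
        exact (hr _).ne'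
      letI : Algebra R (AdjoinRoot g) :=
        ((algebraMap B' (AdjoinRoot g)).comp (algebraMap R B')).toAlgebra
      have halg : ∀ x : R, algebraMap R (AdjoinRoot g) x
          = algebraMap B' (AdjoinRoot g) (algebraMap R B' x) := fun x => rfl
      have hinj2 : Function.Injective (algebraMap B' (AdjoinRoot g)) :=
        adjoinRoot_algebraMap_injective hg hdeg
      refine ⟨AdjoinRoot g, inferInstance, ‹_›, ?_, ?_⟩
      · intro a b hab
        exact hinj (hinj2 (by rw [← halg, ← halg, hab]))
      · intro i
        refine Fin.lastCases ?_ ?_ i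
        · refine ⟨AdjoinRoot.root g, ?_⟩
          have h0 : AdjoinRoot.mk g g = 0 := AdjoinRoot.mk_self
          rw [hgdef, map_sub, map_pow, AdjoinRoot.mk_X, AdjoinRoot.mk_C, sub_eq_zero] at h0
          rw [halg, h0, ← hc, AdjoinRoot.algebraMap_eq]
        · intro j
          obtain ⟨s, hs⟩ := hroot j
          exact ⟨algebraMap B' _ s, by rw [← map_pow, hs, halg]⟩


theorem ringKrullDim_eq_of_isIntegral_of_injective {R : Type u} {S : Type v} [CommRing R]
    [CommRing S] [Algebra R S] [Algebra.IsIntegral R S]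
    (hinj : Function.Injective (algebraMap R S)) :
    ringKrullDim S = ringKrullDim R := by
  apply le_antisymm
  · refine Order.krullDim_le_of_strictMono
      (fun q => ⟨q.asIdeal.comap (algebraMap R S), inferInstance⟩) ?_
    intro q q' hlt
    have hlt' : q.asIdeal < q'.asIdeal := hlt
    obtain ⟨x, hx', hx⟩ := SetLike.exists_of_lt hlt'
    have : q.asIdeal.comap (algebraMap R S) < q'.asIdeal.comap (algebraMap R S) :=
      Ideal.comap_lt_comap_of_integral_mem_sdiff hlt'.le ⟨hx', hx⟩
        (Algebra.IsIntegral.isIntegral x)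
    exact this
  · have key : ∀ (k : ℕ) (p : LTSeries (PrimeSpectrum R)), p.length = k →
        ∃ q : LTSeries (PrimeSpectrum S), q.length = p.length ∧
          q.last.asIdeal.comap (algebraMap R S) = p.last.asIdeal := by
      intro k
      induction k with
      | zero =>
          intro p hp
          obtain ⟨Q, _, hQp, hQc⟩ := Ideal.exists_ideal_over_prime_of_isIntegral
            p.last.asIdeal (⊥ : Ideal S) (by
              rw [← RingHom.ker_eq_comap_bot, (RingHom.injective_iff_ker_eq_bot _).mp hinj]
              exact bot_le)
          exact ⟨RelSeries.singleton _ ⟨Q, hQp⟩, by simpa using hp.symm, hQc⟩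
      | succ k ih =>
          intro p hp
          have hne : p.length ≠ 0 := by omega
          obtain ⟨q, hql, hqc⟩ := ih p.eraseLast (by simp [hp])
          have hlt : p.eraseLast.last < p.last := p.eraseLast_last_rel_last hne
          obtain ⟨Q, hQge, hQp, hQc⟩ := Ideal.exists_ideal_over_prime_of_isIntegral
            p.last.asIdeal q.last.asIdeal (by rw [hqc]; exact le_of_lt hlt)
          have hQlt : q.last < (⟨Q, hQp⟩ : PrimeSpectrum S) := by
            refine lt_of_le_of_ne hQge ?_
            intro h
            have : q.last.asIdeal = Q := congrArg PrimeSpectrum.asIdeal h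
            rw [← this, hqc] at hQc
            exact hlt.ne (PrimeSpectrum.ext hQc)
          refine ⟨q.snoc ⟨Q, hQp⟩ hQlt, ?_, ?_⟩
          · have he : p.eraseLast.length = p.length - 1 := rfl
            simp only [RelSeries.snoc_length]
            omega
          · rw [RelSeries.last_snoc]; exact hQc
    apply iSup_le
    intro p
    obtain ⟨q, hq, -⟩ := key p.length p rfl
    have h1 : (q.length : WithBot ℕ∞) ≤ Order.krullDim (PrimeSpectrum S) :=
      Order.LTSeries.length_le_krullDim q
    rw [hq] at h1
    exact_mod_cast h1


theorem maximalIdeal_infinite_of_exists_lt {R : Type u} [CommRing R] [IsLocalRing R]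
    (h : ∃ p q : PrimeSpectrum R, p < q) :
    ((maximalIdeal R : Ideal R) : Set R).Infinite := by
  intro hfin
  obtain ⟨p, q, hpq⟩ := h
  have hqm : q.asIdeal ≤ maximalIdeal R := le_maximalIdeal q.isPrime.ne_top
  obtain ⟨a, haq, hap⟩ := SetLike.exists_of_lt (show p.asIdeal < q.asIdeal from hpq)
  have ham : a ∈ maximalIdeal R := hqm haq
  set μ : R →ₗ[R] R := LinearMap.toSpanSingleton R R a with hμ
  set K : Ideal R := LinearMap.ker μ with hK
  have hKp : K ≤ p.asIdeal := by
    intro x hx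
    have hx0 : x * a = 0 := by simpa [hK, hμ, LinearMap.toSpanSingleton, smul_eq_mul] using hx
    rcases p.isPrime.mem_or_mem (hx0 ▸ p.asIdeal.zero_mem) with h1 | h1
    · exact h1
    · exact absurd h1 hap
  -- R ⧸ K is finite
  have hsub : (LinearMap.range μ : Set R) ⊆ (maximalIdeal R : Ideal R) := by
    rintro _ ⟨r, rfl⟩
    simpa [hμ, LinearMap.toSpanSingleton, smul_eq_mul] using
      Ideal.mul_mem_left (maximalIdeal R) r ham
  haveI : Finite (LinearMap.range μ) := (hfin.subset hsub).to_subtype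
  haveI : Finite (R ⧸ K) := Finite.of_equiv _ (μ.quotKerEquivRange).symm.toEquiv
  -- primes in R ⧸ K
  set π := Ideal.Quotient.mk K with hπ
  have hsurj : Function.Surjective π := Ideal.Quotient.mk_surjective
  have hker : RingHom.ker π = K := Ideal.mk_ker
  have hpm : p.asIdeal ≤ maximalIdeal R := le_maximalIdeal p.isPrime.ne_top
  haveI hp' : (Ideal.map π p.asIdeal).IsPrime :=
    Ideal.map_isPrime_of_surjective hsurj (by rw [hker]; exact hKp)
  have hcp : Ideal.comap π (Ideal.map π p.asIdeal) = p.asIdeal := by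
    rw [Ideal.comap_map_of_surjective _ hsurj, ← RingHom.ker_eq_comap_bot, hker,
      sup_eq_left.mpr hKp]
  have hcm : Ideal.comap π (Ideal.map π (maximalIdeal R)) = maximalIdeal R := by
    rw [Ideal.comap_map_of_surjective _ hsurj, ← RingHom.ker_eq_comap_bot, hker,
      sup_eq_left.mpr (hKp.trans hpm)]
  -- p' is maximal since R ⧸ K is a finite commutative ring
  haveI : Finite ((R ⧸ K) ⧸ (Ideal.map π p.asIdeal)) :=
    Finite.of_surjective _ Ideal.Quotient.mk_surjective
  have hfield : IsField ((R ⧸ K) ⧸ (Ideal.map π p.asIdeal)) :=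
    Finite.isField_of_domain _
  have hp'max : (Ideal.map π p.asIdeal).IsMaximal :=
    Ideal.Quotient.maximal_of_isField _ hfield
  have hlt : Ideal.map π p.asIdeal < Ideal.map π (maximalIdeal R) := by
    refine lt_of_le_of_ne (Ideal.map_mono hpm) ?_
    intro hEq
    have : p.asIdeal = maximalIdeal R := by rw [← hcp, hEq, hcm]
    exact hap (this ▸ ham)
  have hm'top : Ideal.map π (maximalIdeal R) ≠ ⊤ := by
    intro hEq
    have := hcm
    rw [hEq, Ideal.comap_top] at this
    exact (maximalIdeal.isMaximal R).ne_top this.symm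
  exact hlt.ne (hp'max.eq_of_le hm'top hlt.le)


set_option maxHeartbeats 1000000 in
theorem rootRing_aux
    (R : Type u) [CommRing R] [IsNoetherianRing R] [IsLocalRing R]
    (hreg : ∃ s : Finset R, Ideal.span (s : Set R) = maximalIdeal R ∧
      ((s.card : ℕ) : WithBot (WithTop ℕ)) = ringKrullDim R)
    (n : ℕ) (f : Fin n → R) (hf : ∀ i, f i ∈ maximalIdeal R)
    (hindep : LinearIndependent (ResidueField R)
      (fun i : Fin n => (maximalIdeal R).toCotangent ⟨f i, hf i⟩))
    (r : Fin n → ℕ) (hr : ∀ i, 0 < r i) :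
    IsNoetherianRing (MvPolynomial (Fin n) R ⧸
        Ideal.span (Set.range fun i => (X i : MvPolynomial (Fin n) R) ^ r i - C (f i))) ∧
    (∃! I : Ideal (MvPolynomial (Fin n) R ⧸
        Ideal.span (Set.range fun i => (X i : MvPolynomial (Fin n) R) ^ r i - C (f i))),
        I.IsMaximal) ∧
    ringKrullDim (MvPolynomial (Fin n) R ⧸
        Ideal.span (Set.range fun i => (X i : MvPolynomial (Fin n) R) ^ r i - C (f i)))
      = ringKrullDim R ∧
    (∃ s : Finset (MvPolynomial (Fin n) R ⧸
        Ideal.span (Set.range fun i => (X i : MvPolynomial (Fin n) R) ^ r i - C (f i))),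
      (∀ I : Ideal (MvPolynomial (Fin n) R ⧸
        Ideal.span (Set.range fun i => (X i : MvPolynomial (Fin n) R) ^ r i - C (f i))),
        I.IsMaximal → Ideal.span (s : Set _) = I) ∧
      ((s.card : ℕ) : WithBot (WithTop ℕ)) = ringKrullDim (MvPolynomial (Fin n) R ⧸
        Ideal.span (Set.range fun i => (X i : MvPolynomial (Fin n) R) ^ r i - C (f i)))) ∧
    (∀ (d : ℕ) (g : Fin d → R),
      Ideal.span (Set.range f ∪ Set.range g) = maximalIdeal R →
      (((n + d : ℕ) : WithBot (WithTop ℕ)) = ringKrullDim R) →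
      ∀ I : Ideal (MvPolynomial (Fin n) R ⧸
        Ideal.span (Set.range fun i => (X i : MvPolynomial (Fin n) R) ^ r i - C (f i))),
        I.IsMaximal →
        I = Ideal.span
          (Set.range (fun i : Fin n => (Ideal.Quotient.mk _ (X i) : MvPolynomial (Fin n) R ⧸
            Ideal.span (Set.range fun i => (X i : MvPolynomial (Fin n) R) ^ r i - C (f i)))) ∪
            Set.range (fun j : Fin d => (Ideal.Quotient.mk _ (C (g j)) : MvPolynomial (Fin n) R ⧸
            Ideal.span (Set.range fun i => (X i : MvPolynomial (Fin n) R) ^ r i - C (f i)))))) := by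
  classical
  set I : Ideal (MvPolynomial (Fin n) R) :=
    Ideal.span (Set.range fun i => (X i : MvPolynomial (Fin n) R) ^ r i - C (f i)) with hIdef
  -- basic notation
  set x : Fin n → (MvPolynomial (Fin n) R ⧸ I) := fun i => Ideal.Quotient.mk I (X i) with hxdef
  have halgC : ∀ a : R, algebraMap R (MvPolynomial (Fin n) R ⧸ I) a
      = Ideal.Quotient.mk I (C a) := by
    intro a
    rw [IsScalarTower.algebraMap_apply R (MvPolynomial (Fin n) R) (MvPolynomial (Fin n) R ⧸ I),
      Ideal.Quotient.algebraMap_eq, MvPolynomial.algebraMap_eq]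
  have hxpow : ∀ i, x i ^ r i = algebraMap R (MvPolynomial (Fin n) R ⧸ I) (f i) := by
    intro i
    rw [halgC, hxdef]
    rw [← map_pow, Ideal.Quotient.mk_eq_mk_iff_sub_mem]
    exact Ideal.subset_span ⟨i, rfl⟩
  -- Noetherian
  have hNoeth : IsNoetherianRing (MvPolynomial (Fin n) R ⧸ I) := by infer_instance
  -- finiteness and integrality
  have hadj : Algebra.adjoin R (Set.range x) = ⊤ := by
    have himg : Set.range x = (Ideal.Quotient.mkₐ R I) '' Set.range X := by
      rw [← Set.range_comp]; rfl
    rw [himg, ← AlgHom.map_adjoin, adjoin_range_X, Algebra.map_top,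
      AlgHom.range_eq_top]
    exact Ideal.Quotient.mkₐ_surjective R I
  have hint : ∀ i, IsIntegral R (x i) := by
    intro i
    refine ⟨Polynomial.X ^ r i - Polynomial.C (f i),
      Polynomial.monic_X_pow_sub_C _ (hr i).ne', ?_⟩
    simp only [Polynomial.eval₂_sub, Polynomial.eval₂_pow, Polynomial.eval₂_X,
      Polynomial.eval₂_C]
    rw [hxpow i, sub_self]
  haveI hfinQ : Module.Finite R (MvPolynomial (Fin n) R ⧸ I) := by
    refine ⟨?_⟩
    rw [← Algebra.top_toSubmodule, ← hadj]
    exact fg_adjoin_of_finite (Set.finite_range x) (by rintro y ⟨i, rfl⟩; exact hint i)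
  haveI hintQ : Algebra.IsIntegral R (MvPolynomial (Fin n) R ⧸ I) :=
    Algebra.IsIntegral.of_finite R _
  -- injectivity of R → Q
  obtain ⟨B, iB, iaB, hBinj, hBroot⟩ := exists_root_extension n f r hr
  letI := iB; letI := iaB
  choose sroot hsroot using hBroot
  have hIker : ∀ p ∈ I, (MvPolynomial.aeval sroot : MvPolynomial (Fin n) R →ₐ[R] B) p = 0 := by
    intro p hp
    have hle : I ≤ RingHom.ker (MvPolynomial.aeval sroot :
        MvPolynomial (Fin n) R →ₐ[R] B).toRingHom := by
      rw [hIdef, Ideal.span_le]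
      rintro y ⟨i, rfl⟩
      simp only [SetLike.mem_coe, RingHom.mem_ker, AlgHom.toRingHom_eq_coe,
        RingHom.coe_coe, map_sub, map_pow, aeval_X, aeval_C]
      rw [hsroot i, sub_self]
    exact hle hp
  set ψB : (MvPolynomial (Fin n) R ⧸ I) →+* B :=
    Ideal.Quotient.lift I (MvPolynomial.aeval sroot :
      MvPolynomial (Fin n) R →ₐ[R] B).toRingHom hIker with hψB
  have hinjQ : Function.Injective (algebraMap R (MvPolynomial (Fin n) R ⧸ I)) := by
    intro a b hab
    apply hBinj
    have h2 : ψB (algebraMap R _ a) = ψB (algebraMap R _ b) := by rw [hab]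
    simpa only [hψB, halgC, Ideal.Quotient.lift_mk, AlgHom.toRingHom_eq_coe,
      RingHom.coe_coe, aeval_C] using h2
    -- residue map out of the quotient
  have hresker : ∀ p ∈ I,
      ((residue R).comp (constantCoeff : MvPolynomial (Fin n) R →+* R)) p = 0 := by
    intro p hp
    have hle : I ≤ RingHom.ker ((residue R).comp
        (constantCoeff : MvPolynomial (Fin n) R →+* R)) := by
      rw [hIdef, Ideal.span_le]
      rintro y ⟨i, rfl⟩
      simp only [SetLike.mem_coe, RingHom.mem_ker, RingHom.coe_comp, Function.comp_apply,
        map_sub, map_pow, constantCoeff_X, constantCoeff_C, map_zero]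
      rw [zero_pow (hr i).ne', zero_sub, neg_eq_zero, residue_eq_zero_iff]
      exact hf i
    exact hle hp
  set ψ : (MvPolynomial (Fin n) R ⧸ I) →+* ResidueField R :=
    Ideal.Quotient.lift I ((residue R).comp constantCoeff) hresker with hψ
  set M : Ideal (MvPolynomial (Fin n) R ⧸ I) :=
    Ideal.span (Set.range x) ⊔ Ideal.map (algebraMap R _) (maximalIdeal R) with hM
  have hψx : ∀ i, ψ (x i) = 0 := by
    intro i
    rw [hψ, hxdef]
    simp only [Ideal.Quotient.lift_mk, RingHom.coe_comp, Function.comp_apply, constantCoeff_X,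
      map_zero]
  have hψalg : ∀ a : R, ψ (algebraMap R _ a) = residue R a := by
    intro a
    rw [halgC, hψ]
    simp only [Ideal.Quotient.lift_mk, RingHom.coe_comp, Function.comp_apply, constantCoeff_C]
  have hMker : M = RingHom.ker ψ := by
    apply le_antisymm
    · rw [hM]
      apply sup_le
      · rw [Ideal.span_le]; rintro y ⟨i, rfl⟩
        simp only [SetLike.mem_coe, RingHom.mem_ker]; exact hψx i
      · rw [Ideal.map_le_iff_le_comap]
        intro a ha
        rw [Ideal.mem_comap, RingHom.mem_ker, hψalg, residue_eq_zero_iff]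
        exact ha
    · intro a ha
      obtain ⟨p, rfl⟩ := Ideal.Quotient.mk_surjective a
      rw [RingHom.mem_ker, hψ, Ideal.Quotient.lift_mk, RingHom.comp_apply] at ha
      have hc : constantCoeff p ∈ maximalIdeal R := (residue_eq_zero_iff _).mp ha
      have hsplit : Ideal.Quotient.mk I p
          = algebraMap R _ (constantCoeff p)
            + Ideal.Quotient.mk I (p - C (constantCoeff p)) := by
        rw [halgC, ← map_add, add_sub_cancel]
      rw [hsplit, hM]
      apply Ideal.add_mem
      · exact Ideal.mem_sup_right (Ideal.mem_map_of_mem _ hc)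
      · apply Ideal.mem_sup_left
        have hmem := sub_C_constantCoeff_mem_span p
        have hle2 : Ideal.map (Ideal.Quotient.mk I)
            (Ideal.span (Set.range (X : Fin n → MvPolynomial (Fin n) R)))
            ≤ Ideal.span (Set.range x) := by
          rw [Ideal.map_span, ← Set.range_comp]
          exact le_of_eq rfl
        exact hle2 (Ideal.mem_map_of_mem _ hmem)
  have hψsurj : Function.Surjective ψ := by
    intro b
    obtain ⟨a, rfl⟩ := residue_surjective (R := R) b
    exact ⟨algebraMap R _ a, hψalg a⟩
  have hMmax : M.IsMaximal := by
    rw [hMker]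
    exact RingHom.ker_isMaximal_of_surjective ψ hψsurj
  have hMuniq : ∀ J : Ideal (MvPolynomial (Fin n) R ⧸ I), J.IsMaximal → J = M := by
    intro J hJ
    haveI := hJ
    have hcomJmax := Ideal.isMaximal_comap_of_isIntegral_of_isMaximal (R := R) J
    have hcom : Ideal.comap (algebraMap R (MvPolynomial (Fin n) R ⧸ I)) J = maximalIdeal R :=
      IsLocalRing.eq_maximalIdeal hcomJmax
    have hMJ : M ≤ J := by
      rw [hM]
      apply sup_le
      · rw [Ideal.span_le]; rintro y ⟨i, rfl⟩
        have hfi : f i ∈ Ideal.comap (algebraMap R (MvPolynomial (Fin n) R ⧸ I)) J := by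
          rw [hcom]; exact hf i
        rw [Ideal.mem_comap, ← hxpow i] at hfi
        exact hJ.isPrime.mem_of_pow_mem _ hfi
      · rw [Ideal.map_le_iff_le_comap, hcom]
    exact (hMmax.eq_of_le hJ.ne_top hMJ).symm
  -- Krull dimension
  have hdim : ringKrullDim (MvPolynomial (Fin n) R ⧸ I) = ringKrullDim R :=
    ringKrullDim_eq_of_isIntegral_of_injective hinjQ
    -- cotangent space bookkeeping
  obtain ⟨s, hs, hcard⟩ := hreg
  set kk := ResidueField R with hkk
  set V := CotangentSpace R with hV
  set φv : Fin n → V := fun i => (maximalIdeal R).toCotangent ⟨f i, hf i⟩ with hφv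
  have hSind : LinearIndepOn kk id (Set.range φv) :=
    (linearIndepOn_id_range_iff hindep.injective).mpr hindep
  set bset : Set V := hSind.extend (Set.subset_univ _) with hbset
  let bbasis : Module.Basis bset kk V := Module.Basis.extend hSind
  haveI : Fintype bset := FiniteDimensional.fintypeBasisIndex bbasis
  set e := Module.finrank kk V with he
  have hbcard : bset.toFinset.card = e := by
    rw [he, Module.finrank_eq_card_basis bbasis, Set.toFinset_card]
  have hsm : ∀ a ∈ s, a ∈ maximalIdeal R := fun a ha => by
    rw [← hs]; exact Ideal.subset_span ha
  set w : {a // a ∈ s} → V := fun a => (maximalIdeal R).toCotangent ⟨a.1, hsm a.1 a.2⟩ with hw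
  set S1 : Set (maximalIdeal R) := {y : (maximalIdeal R) | (y : R) ∈ s} with hS1
  have hS1span : Submodule.span R S1 = ⊤ := by
    apply Submodule.map_injective_of_injective (Submodule.injective_subtype (maximalIdeal R))
    rw [Submodule.map_span, Submodule.map_top, Submodule.range_subtype]
    have himg : (maximalIdeal R).subtype '' S1 = (s : Set R) := by
      ext a
      constructor
      · rintro ⟨y, hy, rfl⟩; exact hy
      · intro ha; exact ⟨⟨a, hsm a ha⟩, ha, rfl⟩
    rw [himg]
    exact hs
  have hVspan : Submodule.span kk ((maximalIdeal R).toCotangent '' S1) = ⊤ :=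
    (CotangentSpace.span_image_eq_top_iff).mpr hS1span
  have himg2 : (maximalIdeal R).toCotangent '' S1 = Set.range w := by
    ext v; constructor
    · rintro ⟨y, hy, rfl⟩; exact ⟨⟨y.1, hy⟩, rfl⟩
    · rintro ⟨a, rfl⟩; exact ⟨⟨a.1, hsm a.1 a.2⟩, a.2, rfl⟩
  have heD : e ≤ s.card := by
    have h1 : e = Module.finrank kk (Submodule.span kk (Set.range w)) := by
      rw [← himg2, hVspan, finrank_top]
    rw [h1]
    calc Module.finrank kk (Submodule.span kk (Set.range w))
        ≤ (Set.range w).toFinset.card := finrank_span_le_card _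
      _ = Fintype.card (Set.range w) := Set.toFinset_card _
      _ ≤ Fintype.card {a // a ∈ s} := Fintype.card_range_le (f := w)
      _ = s.card := Fintype.card_coe s
  have hφsub : Finset.univ.image φv ⊆ bset.toFinset := by
    intro v hv
    rw [Set.mem_toFinset]
    obtain ⟨i, _, rfl⟩ := Finset.mem_image.mp hv
    exact hSind.subset_extend _ ⟨i, rfl⟩
  set E : Finset V := bset.toFinset \ Finset.univ.image φv with hE
  have hinjφ : Function.Injective φv := hindep.injective
  have hEcard : E.card = e - n := by
    rw [hE, Finset.card_sdiff, Finset.inter_eq_left.mpr hφsub, hbcard, Finset.card_image_of_injective _ hinjφ,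
      Finset.card_univ, Fintype.card_fin]
  have hn_le_e : n ≤ e := by
    calc n = (Finset.univ.image φv).card := by
          rw [Finset.card_image_of_injective _ hinjφ, Finset.card_univ, Fintype.card_fin]
      _ ≤ bset.toFinset.card := Finset.card_le_card hφsub
      _ = e := hbcard
  choose cotlift hcotlift using Ideal.toCotangent_surjective (maximalIdeal R)
  set T : Finset R := E.image (fun v => ((cotlift v : (maximalIdeal R)) : R)) with hT
  have hTm : ∀ a ∈ T, a ∈ maximalIdeal R := by
    intro a ha
    obtain ⟨v, _, rfl⟩ := Finset.mem_image.mp ha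
    exact (cotlift v).2
  have hTcard : T.card ≤ e - n := by
    rw [hT, ← hEcard]; exact Finset.card_image_le
  -- span (range f ∪ T) = maximal ideal
  have hspanfT : Ideal.span (Set.range f ∪ ↑T) = maximalIdeal R := by
    set S2 : Set (maximalIdeal R) :=
      Set.range (fun i => (⟨f i, hf i⟩ : (maximalIdeal R))) ∪ (cotlift '' ↑E) with hS2
    have hS2img : (maximalIdeal R).toCotangent '' S2 = Set.range φv ∪ ↑E := by
      rw [hS2, Set.image_union, ← Set.range_comp]
      congr 1
      rw [← Set.image_comp,
        show ((maximalIdeal R).toCotangent ∘ cotlift) = id from funext hcotlift, Set.image_id]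
    have hrangeb : Set.range ⇑bbasis = bset := by
      have : ∀ i : bset, bbasis i = (i : V) := fun i => Module.Basis.extend_apply_self hSind i
      rw [show ⇑bbasis = ((↑) : bset → V) from funext this]
      exact Subtype.range_coe
    have hspanb : Submodule.span kk bset = ⊤ := by
      have hbs := bbasis.span_eq
      rwa [hrangeb] at hbs
    have hS2span : Submodule.span kk ((maximalIdeal R).toCotangent '' S2) = ⊤ := by
      rw [hS2img]
      apply top_unique
      rw [← hspanb]
      apply Submodule.span_le.mpr
      intro v hv
      by_cases hcase : v ∈ Finset.univ.image φv
      · obtain ⟨i, _, rfl⟩ := Finset.mem_image.mp hcase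
        exact Submodule.subset_span (Set.mem_union_left _ ⟨i, rfl⟩)
      · have : v ∈ E := by
          rw [hE, Finset.mem_sdiff]
          exact ⟨Set.mem_toFinset.mpr hv, hcase⟩
        exact Submodule.subset_span (Set.mem_union_right _ this)
    have hS2spanR : Submodule.span R S2 = ⊤ := (CotangentSpace.span_image_eq_top_iff).mp hS2span
    have hmap := congrArg (Submodule.map (Submodule.subtype (maximalIdeal R))) hS2spanR
    rw [Submodule.map_span, Submodule.map_top, Submodule.range_subtype] at hmap
    have himg3 : (maximalIdeal R).subtype '' S2 = Set.range f ∪ ↑T := by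
      rw [hS2, Set.image_union, ← Set.range_comp, hT, Finset.coe_image, ← Set.image_comp]
      rfl
    rw [himg3] at hmap
    exact hmap
  -- the generating finset of M
  set G : Finset (MvPolynomial (Fin n) R ⧸ I) :=
    Finset.image x Finset.univ ∪ Finset.image (algebraMap R _) T with hG
  have hGsub : ↑G ⊆ (M : Set (MvPolynomial (Fin n) R ⧸ I)) := by
    intro a ha
    rw [hG] at ha
    rcases Finset.mem_union.mp ha with h1 | h1
    · obtain ⟨i, _, rfl⟩ := Finset.mem_image.mp h1
      exact Ideal.mem_sup_left (Ideal.subset_span ⟨i, rfl⟩)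
    · obtain ⟨a', ha', rfl⟩ := Finset.mem_image.mp h1
      exact Ideal.mem_sup_right (Ideal.mem_map_of_mem _ (hTm a' ha'))
  have hGspan : Ideal.span (↑G : Set (MvPolynomial (Fin n) R ⧸ I)) = M := by
    apply le_antisymm
    · rw [Ideal.span_le]; exact hGsub
    · rw [hM]
      apply sup_le
      · apply Ideal.span_le.mpr
        rintro y ⟨i, rfl⟩
        apply Ideal.subset_span
        rw [hG]
        exact Finset.mem_union_left _ (Finset.mem_image_of_mem _ (Finset.mem_univ i))
      · rw [← hspanfT, Ideal.map_span]
        apply Ideal.span_le.mpr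
        rintro y ⟨z, hz, rfl⟩
        rcases hz with hz | hz
        · obtain ⟨i, rfl⟩ := hz
          rw [← hxpow i]
          refine Ideal.pow_mem_of_mem _ ?_ _ (hr i)
          apply Ideal.subset_span
          rw [hG]
          exact Finset.mem_union_left _ (Finset.mem_image_of_mem _ (Finset.mem_univ i))
        · apply Ideal.subset_span
          rw [hG]
          exact Finset.mem_union_right _ (Finset.mem_image_of_mem _ hz)
  have hGcard : G.card ≤ s.card := by
    calc G.card ≤ (Finset.image x Finset.univ).card + (Finset.image (algebraMap R _) T).card :=
          hG ▸ Finset.card_union_le _ _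
      _ ≤ n + (e - n) := by
          gcongr
          · exact (Finset.card_image_le).trans (by simp)
          · exact (Finset.card_image_le).trans hTcard
      _ = e := by omega
      _ ≤ s.card := heD
  -- pad G to exactly s.card elements if necessary
  have hpad : ∃ u : Finset (MvPolynomial (Fin n) R ⧸ I),
      Ideal.span (↑u : Set (MvPolynomial (Fin n) R ⧸ I)) = M ∧ u.card = s.card := by
    rcases eq_or_lt_of_le hGcard with hEq | hLt
    · exact ⟨G, hGspan, hEq⟩
    · -- need infinitely many elements of M
      have hone : (1 : ℕ) ≤ s.card := by omega
      have hdim1 : ∃ p q : PrimeSpectrum R, p < q := by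
        by_contra hno
        push_neg at hno
        have hlen : ∀ pp : LTSeries (PrimeSpectrum R), pp.length = 0 := by
          intro pp
          by_contra hl
          exact absurd (pp.step ⟨0, Nat.pos_of_ne_zero hl⟩) (by
            simpa using hno _ _)
        have hle0 : ringKrullDim R ≤ 0 := by
          apply iSup_le
          intro pp
          simp [hlen pp]
        rw [← hcard] at hle0
        have : ((s.card : ℕ) : WithBot (WithTop ℕ)) ≤ ((0 : ℕ) : WithBot (WithTop ℕ)) := by
          rw [Nat.cast_zero]; exact hle0
        rw [Nat.cast_le (α := WithBot (WithTop ℕ))] at this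
        omega
      have hMinf : ((M : Set (MvPolynomial (Fin n) R ⧸ I))).Infinite := by
        have hminf := maximalIdeal_infinite_of_exists_lt hdim1
        have himg : (algebraMap R (MvPolynomial (Fin n) R ⧸ I)) ''
            ((maximalIdeal R : Ideal R) : Set R) ⊆ (M : Set (MvPolynomial (Fin n) R ⧸ I)) := by
          rintro _ ⟨a, ha, rfl⟩
          exact Ideal.mem_sup_right (Ideal.mem_map_of_mem _ ha)
        exact Set.Infinite.mono himg (hminf.image (hinjQ.injOn))
      have hdiff : ((M : Set (MvPolynomial (Fin n) R ⧸ I)) \ ↑G).Infinite :=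
        hMinf.diff (G.finite_toSet)
      obtain ⟨extra, hextra_sub, hextra_card⟩ := hdiff.exists_subset_card_eq (s.card - G.card)
      refine ⟨G ∪ extra, ?_, ?_⟩
      · apply le_antisymm
        · rw [Ideal.span_le, Finset.coe_union]
          apply Set.union_subset hGsub
          exact fun a ha => (hextra_sub ha).1
        · rw [← hGspan]
          exact Ideal.span_mono (Finset.coe_subset.mpr Finset.subset_union_left)
      · have hdisj : Disjoint G extra := by
          rw [Finset.disjoint_right]
          intro a ha
          exact fun hG' => (hextra_sub ha).2 (Finset.mem_coe.mpr hG')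
        rw [Finset.card_union_of_disjoint hdisj, hextra_card]
        omega
  obtain ⟨u, hu_span, hu_card⟩ := hpad
  -- final assembly
  refine ⟨hNoeth, ⟨M, hMmax, fun J hJ => hMuniq J hJ⟩, hdim, ⟨u, ?_, ?_⟩, ?_⟩
  · intro J hJ
    rw [hMuniq J hJ, hu_span]
  · rw [hu_card, hdim, hcard]
  · intro d g hspanfg hnd J hJ
    rw [hMuniq J hJ, hM]
    apply le_antisymm
    · apply sup_le
      · apply Ideal.span_mono
        exact Set.subset_union_left
      · rw [← hspanfg, Ideal.map_span]
        apply Ideal.span_le.mpr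
        rintro y ⟨z, hz, rfl⟩
        rcases hz with hz | hz
        · obtain ⟨i, rfl⟩ := hz
          rw [← hxpow i]
          refine Ideal.pow_mem_of_mem _ ?_ _ (hr i)
          exact Ideal.subset_span (Set.mem_union_left _ ⟨i, rfl⟩)
        · obtain ⟨j, rfl⟩ := hz
          rw [halgC]
          exact Ideal.subset_span (Set.mem_union_right _ ⟨j, rfl⟩)
    · apply Ideal.span_le.mpr
      rintro y (⟨i, rfl⟩ | ⟨j, rfl⟩)
      · exact Ideal.mem_sup_left (Ideal.subset_span ⟨i, rfl⟩)
      · show Ideal.Quotient.mk I (C (g j)) ∈ Ideal.span (Set.range x)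
            ⊔ Ideal.map (algebraMap R (MvPolynomial (Fin n) R ⧸ I)) (maximalIdeal R)
        rw [← halgC]
        apply Ideal.mem_sup_right
        apply Ideal.mem_map_of_mem
        rw [← hspanfg]
        exact Ideal.subset_span (Set.mem_union_right _ ⟨j, rfl⟩)


/-- Let `(R, m)` be a regular local Noetherian commutative ring,
`f₁,…,fₙ ∈ m` part of a regular system of parameters (i.e. their images in `m/m²` are
linearly independent over the residue field), and `r₁,…,rₙ` positive integers.  Then
`A = R[t₁,…,tₙ]/(tᵢ^{rᵢ} − fᵢ)` is a regular local ring of the same Krull dimension as `R`,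
whose maximal ideal is generated by the `tᵢ` together with the remaining members of the
regular system of parameters.  (Regularity of `R`, resp. `A`, is expressed by the existence
of a generating set of the maximal ideal of cardinality equal to the Krull dimension;
locality of `A` by the existence of a unique maximal ideal.) -/
theorem rootRing_regular_local
    (R : Type*) [CommRing R] [IsNoetherianRing R] [IsLocalRing R]
    (hreg : ∃ s : Finset R, Ideal.span (s : Set R) = maximalIdeal R ∧
      ((s.card : ℕ) : WithBot (WithTop ℕ)) = ringKrullDim R)
    (n : ℕ) (f : Fin n → R) (hf : ∀ i, f i ∈ maximalIdeal R)
    (hindep : LinearIndependent (ResidueField R)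
      (fun i : Fin n => (maximalIdeal R).toCotangent ⟨f i, hf i⟩))
    (r : Fin n → ℕ) (hr : ∀ i, 0 < r i) :
    IsNoetherianRing (rootRing R n f r) ∧
    (∃! I : Ideal (rootRing R n f r), I.IsMaximal) ∧
    ringKrullDim (rootRing R n f r) = ringKrullDim R ∧
    (∃ s : Finset (rootRing R n f r),
      (∀ I : Ideal (rootRing R n f r), I.IsMaximal → Ideal.span (s : Set (rootRing R n f r)) = I) ∧
      ((s.card : ℕ) : WithBot (WithTop ℕ)) = ringKrullDim (rootRing R n f r)) ∧
    (∀ (d : ℕ) (g : Fin d → R),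
      Ideal.span (Set.range f ∪ Set.range g) = maximalIdeal R →
      (((n + d : ℕ) : WithBot (WithTop ℕ)) = ringKrullDim R) →
      ∀ I : Ideal (rootRing R n f r), I.IsMaximal →
        I = Ideal.span
          (Set.range (fun i : Fin n =>
              (Ideal.Quotient.mk _ (X i) : rootRing R n f r)) ∪
            Set.range (fun j : Fin d =>
              (Ideal.Quotient.mk _ (C (g j)) : rootRing R n f r)))) := by
  exact rootRing_aux R hreg n f hf hindep r hr
end
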